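/- arXiv:2010.15699 — 6 statements merged into one kernel-verified Lean document; each statement's English description precedes it below -/
import Mathlib

section
/- Let V be a finite-dimensional real inner product space and T : V → V a linear map. (a) If T is positive, then I + T is invertible and the Cayley transform 𝒞(T) = (I − T) ∘ (I + T)⁻¹ satisfies ‖𝒞(T)‖ < 1 in the operator norm. (b) Conversely, if I + T is invertible and ‖𝒞(T)‖ < 1, then T is positive. -/
open scoped RealInnerProductSpace

/-- The Cayley transform `𝒞(T) = (I − T) ∘ (I + T)⁻¹` of a (continuous) linear map `T` on a
finite-dimensional real inner product space, where the inverse is `Ring.inverse`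
(junk value `0` if `I + T` is not invertible). -/
noncomputable def cayley {V : Type*} [NormedAddCommGroup V] [InnerProductSpace ℝ V]
    (T : V →L[ℝ] V) : V →L[ℝ] V :=
  (1 - T) * Ring.inverse (1 + T)

lemma key_id {V : Type*} [NormedAddCommGroup V] [InnerProductSpace ℝ V]
    (T : V →L[ℝ] V) (x : V) :
    ‖(1 + T) x‖ ^ 2 - ‖(1 - T) x‖ ^ 2 = 4 * ⟪T x, x⟫ := by
  have h1 : (1 + T) x = x + T x := rfl
  have h2 : (1 - T) x = x - T x := rfl
  rw [h1, h2, @norm_add_sq_real, @norm_sub_sq_real, real_inner_comm]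
  ring

lemma cayley_strict {V : Type*} [NormedAddCommGroup V] [InnerProductSpace ℝ V]
    (T : V →L[ℝ] V) (hu : IsUnit (1 + T)) (hpos : ∀ x : V, x ≠ 0 → 0 < ⟪T x, x⟫)
    (y : V) (hy : y ≠ 0) : ‖cayley T y‖ < ‖y‖ := by
  set x := Ring.inverse (1 + T) y with hxdef
  have hyx : (1 + T) x = y := by
    have := Ring.mul_inverse_cancel _ hu
    calc (1 + T) x = ((1 + T) * Ring.inverse (1 + T)) y := rfl
    _ = y := by rw [this]; rfl
  have hx0 : x ≠ 0 := by
    intro h; apply hy; rw [← hyx, h, map_zero]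
  have hc : cayley T y = (1 - T) x := rfl
  have hk := key_id T x
  rw [hyx] at hk
  have hpx := hpos x hx0
  have h2 : ‖(1 - T) x‖ ^ 2 < ‖y‖ ^ 2 := by nlinarith
  rw [hc]
  exact lt_of_pow_lt_pow_left₀ 2 (norm_nonneg _) h2

/-- A linear map `T` on a finite-dimensional real inner product space is positive
(`⟨T x, x⟩ > 0` for all `x ≠ 0`) if and only if `I + T` is invertible and the Cayley transform
`𝒞(T) = (I − T) ∘ (I + T)⁻¹` has operator norm `< 1`. -/
theorem positive_iff_cayley_norm_lt_one {V : Type*} [NormedAddCommGroup V]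
    [InnerProductSpace ℝ V] [FiniteDimensional ℝ V] (T : V →L[ℝ] V) :
    ((∀ x : V, x ≠ 0 → 0 < ⟪T x, x⟫) → IsUnit (1 + T) ∧ ‖cayley T‖ < 1) ∧
    ((IsUnit (1 + T) ∧ ‖cayley T‖ < 1) → ∀ x : V, x ≠ 0 → 0 < ⟪T x, x⟫) := by
  constructor
  · intro hpos
    -- injectivity of 1 + T
    have hinj : Function.Injective (1 + T : V →L[ℝ] V) := by
      intro a b hab
      by_contra hne
      have h0 : (1 + T) (a - b) = 0 := by
        simp only [map_sub, hab, sub_self]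
      have hab0 : a - b ≠ 0 := sub_ne_zero.mpr hne
      have : (0 : ℝ) < ⟪T (a - b), a - b⟫ := hpos _ hab0
      have h1 : (1 + T) (a - b) = (a - b) + T (a - b) := rfl
      have h2 : ⟪(a - b) + T (a - b), a - b⟫ = 0 := by
        rw [← h1, h0, inner_zero_left]
      rw [inner_add_left, real_inner_self_eq_norm_sq] at h2
      have := real_inner_self_nonneg (x := a - b)
      nlinarith [sq_nonneg ‖a - b‖, norm_pos_iff.mpr hab0]
    have hsurj : Function.Surjective (1 + T : V →L[ℝ] V) :=
      LinearMap.injective_iff_surjective.mp hinj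
    have hu : IsUnit (1 + T : V →L[ℝ] V) :=
      ContinuousLinearMap.isUnit_iff_bijective.mpr ⟨hinj, hsurj⟩
    refine ⟨hu, ?_⟩
    rcases subsingleton_or_nontrivial V with hV | hV
    · have : cayley T = 0 := Subsingleton.elim _ _
      rw [this]; simpa using one_pos
    · -- maximize ‖cayley T y‖ on the unit sphere
      have hsph : (Metric.sphere (0 : V) 1).Nonempty :=
        NormedSpace.sphere_nonempty.mpr zero_le_one
      have hcomp : IsCompact (Metric.sphere (0 : V) 1) := isCompact_sphere 0 1
      obtain ⟨y₀, hy₀m, hy₀max⟩ := hcomp.exists_isMaxOn hsph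
        ((cayley T).continuous.norm.continuousOn)
      have hy₀1 : ‖y₀‖ = 1 := by simpa using hy₀m
      have hy₀0 : y₀ ≠ 0 := by intro h; rw [h, norm_zero] at hy₀1; norm_num at hy₀1
      set c := ‖cayley T y₀‖ with hc
      have hclt : c < 1 := by
        have := cayley_strict T hu hpos y₀ hy₀0
        rwa [hy₀1] at this
      have hc0 : 0 ≤ c := norm_nonneg _
      have hle : ‖cayley T‖ ≤ c := by
        apply ContinuousLinearMap.opNorm_le_bound _ hc0
        intro y
        rcases eq_or_ne y 0 with rfl | hy
        · simp
        · have hny : 0 < ‖y‖ := norm_pos_iff.mpr hy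
          have hu1 : ‖y‖⁻¹ • y ∈ Metric.sphere (0 : V) 1 := by
            simp [norm_smul, abs_of_pos (inv_pos.mpr hny), inv_mul_cancel₀ hny.ne']
          have hle' : ‖cayley T (‖y‖⁻¹ • y)‖ ≤ c := hy₀max hu1
          have heq : ‖cayley T (‖y‖⁻¹ • y)‖ = ‖y‖⁻¹ * ‖cayley T y‖ := by
            rw [map_smul, norm_smul, norm_inv, norm_norm]
          rw [heq] at hle'
          calc ‖cayley T y‖ = ‖y‖ * (‖y‖⁻¹ * ‖cayley T y‖) := by
                field_simp
          _ ≤ ‖y‖ * c := mul_le_mul_of_nonneg_left hle' hny.le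
          _ = c * ‖y‖ := mul_comm _ _
      exact lt_of_le_of_lt hle hclt
  · rintro ⟨hu, hn⟩ x hx
    set y := (1 + T) x with hydef
    have hinj : Function.Injective (1 + T : V →L[ℝ] V) :=
      (ContinuousLinearMap.isUnit_iff_bijective.mp hu).1
    have hy0 : y ≠ 0 := by
      intro h
      exact hx (hinj (by rw [map_zero]; exact h))
    have hxy : Ring.inverse (1 + T) y = x := by
      have := Ring.inverse_mul_cancel _ hu
      calc Ring.inverse (1 + T) y = (Ring.inverse (1 + T) * (1 + T)) x := rfl
      _ = x := by rw [this]; rfl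
    have hcy : cayley T y = (1 - T) x := by
      show (1 - T) (Ring.inverse (1 + T) y) = (1 - T) x
      rw [hxy]
    have hb : ‖(1 - T) x‖ < ‖y‖ := by
      rw [← hcy]
      calc ‖cayley T y‖ ≤ ‖cayley T‖ * ‖y‖ := (cayley T).le_opNorm y
      _ < 1 * ‖y‖ := by
            exact mul_lt_mul_of_pos_right hn (norm_pos_iff.mpr hy0)
      _ = ‖y‖ := one_mul _
    have hk := key_id T x
    rw [← hydef] at hk
    nlinarith [norm_nonneg ((1 - T) x), norm_nonneg y]
end

section
/- Let V be a finite-dimensional real inner product space and let A : V → V be a linear map satisfying λ‖v‖² ≤ ⟨A v, v⟩ for all v ∈ V, for some λ > 0. Set M = ‖𝒞(A)‖, the operator norm of the Cayley transform of A (which is well defined and satisfies M < 1). Then for all v ∈ V, ‖v‖² + ‖A v‖² ≤ 2·((1 + M²)/(1 − M²))·⟨A v, v⟩. -/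
open scoped RealInnerProductSpace

/-- If `A` satisfies the lower ellipticity bound `λ‖v‖² ≤ ⟨A v, v⟩` with `λ > 0`, then its
Cayley transform is well defined with `M = ‖𝒞(A)‖ < 1`, and
`‖v‖² + ‖A v‖² ≤ 2·((1 + M²)/(1 − M²))·⟨A v, v⟩` for all `v`. -/
theorem distortion_inequality_of_elliptic {V : Type*} [NormedAddCommGroup V]
    [InnerProductSpace ℝ V] [FiniteDimensional ℝ V] (A : V →L[ℝ] V) (lam : ℝ) (hlam : 0 < lam)
    (hA : ∀ v : V, lam * ‖v‖ ^ 2 ≤ ⟪A v, v⟫) :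
    IsUnit (1 + A) ∧ ‖cayley A‖ < 1 ∧
      ∀ v : V, ‖v‖ ^ 2 + ‖A v‖ ^ 2 ≤
        2 * ((1 + ‖cayley A‖ ^ 2) / (1 - ‖cayley A‖ ^ 2)) * ⟪A v, v⟫ := by
  -- injectivity of 1 + A
  have hinj : Function.Injective (1 + A : V →L[ℝ] V) := by
    rw [injective_iff_map_eq_zero]
    intro v hv
    have h1 : ⟪(1 + A : V →L[ℝ] V) v, v⟫ = 0 := by rw [hv]; simp
    have h2 : ‖v‖ ^ 2 + ⟪A v, v⟫ = 0 := by
      have he : (1 + A : V →L[ℝ] V) v = v + A v := by simp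
      rw [he, inner_add_left, real_inner_self_eq_norm_sq] at h1
      linarith
    have : ‖v‖ = 0 := by nlinarith [hA v, norm_nonneg v]
    simpa using this
  have hsurj : Function.Surjective (1 + A : V →L[ℝ] V) :=
    LinearMap.injective_iff_surjective.mp hinj
  have hU : IsUnit (1 + A : V →L[ℝ] V) :=
    ContinuousLinearMap.isUnit_iff_bijective.mpr ⟨hinj, hsurj⟩
  -- key identity: cayley A ((1+A) v) = (1-A) v
  have hkey : ∀ v : V, cayley A ((1 + A : V →L[ℝ] V) v) = (1 - A : V →L[ℝ] V) v := by
    intro v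
    have h1 : (cayley A) * (1 + A) = (1 - A : V →L[ℝ] V) := by
      rw [cayley, mul_assoc, Ring.inverse_mul_cancel _ hU, mul_one]
    calc cayley A ((1 + A : V →L[ℝ] V) v) = ((cayley A) * (1 + A)) v := rfl
      _ = (1 - A : V →L[ℝ] V) v := by rw [h1]
  -- norm identities
  have hplus : ∀ v : V, ‖(1 + A : V →L[ℝ] V) v‖ ^ 2
      = ‖v‖ ^ 2 + ‖A v‖ ^ 2 + 2 * ⟪A v, v⟫ := by
    intro v
    have he : (1 + A : V →L[ℝ] V) v = v + A v := by simp
    rw [he, ← real_inner_self_eq_norm_sq, inner_add_add_self,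
      real_inner_self_eq_norm_sq, real_inner_self_eq_norm_sq,
      real_inner_comm v (A v)]
    ring
  have hminus : ∀ v : V, ‖(1 - A : V →L[ℝ] V) v‖ ^ 2
      = ‖v‖ ^ 2 + ‖A v‖ ^ 2 - 2 * ⟪A v, v⟫ := by
    intro v
    have he : (1 - A : V →L[ℝ] V) v = v - A v := by simp
    rw [he, ← real_inner_self_eq_norm_sq, inner_sub_sub_self,
      real_inner_self_eq_norm_sq, real_inner_self_eq_norm_sq,
      real_inner_comm v (A v)]
    ring
  -- a bound c < 1 for the operator norm of the Cayley transform
  set K : ℝ := max ‖(1 + A : V →L[ℝ] V)‖ 1 with hK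
  have hK1 : (1:ℝ) ≤ K := le_max_right _ _
  have hKpos : (0:ℝ) < K := lt_of_lt_of_le one_pos hK1
  set c : ℝ := Real.sqrt (1 - 4 * lam / K ^ 2) with hc
  have hquot : 0 < 4 * lam / K ^ 2 := by positivity
  have hcnn : 0 ≤ c := Real.sqrt_nonneg _
  have hclt : c < 1 := by
    rcases le_or_gt (1 - 4 * lam / K ^ 2) 0 with h | h
    · have hz : c = 0 := by
        rw [hc, Real.sqrt_eq_zero' ]
        exact h
      rw [hz]; exact one_pos
    · have : c < Real.sqrt 1 := Real.sqrt_lt_sqrt h.le (by linarith)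
      rwa [Real.sqrt_one] at this
  have hCbound : ‖cayley A‖ ≤ c := by
    apply ContinuousLinearMap.opNorm_le_bound _ hcnn
    intro u
    obtain ⟨v, rfl⟩ := hsurj u
    rw [hkey v]
    have hvu : ‖(1 + A : V →L[ℝ] V) v‖ ≤ K * ‖v‖ := by
      calc ‖(1 + A : V →L[ℝ] V) v‖ ≤ ‖(1 + A : V →L[ℝ] V)‖ * ‖v‖ :=
            ContinuousLinearMap.le_opNorm _ _
        _ ≤ K * ‖v‖ := mul_le_mul_of_nonneg_right (le_max_left _ _) (norm_nonneg _)
    have hsq : ‖(1 - A : V →L[ℝ] V) v‖ ^ 2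
        ≤ (1 - 4 * lam / K ^ 2) * ‖(1 + A : V →L[ℝ] V) v‖ ^ 2 := by
      have h2 : 4 * lam / K ^ 2 * ‖(1 + A : V →L[ℝ] V) v‖ ^ 2 ≤ 4 * lam * ‖v‖ ^ 2 := by
        rw [div_mul_eq_mul_div, div_le_iff₀ (by positivity)]
        nlinarith [hvu, norm_nonneg ((1 + A : V →L[ℝ] V) v), norm_nonneg v,
          mul_self_le_mul_self (norm_nonneg ((1 + A : V →L[ℝ] V) v)) hvu]
      have h3 := hA v
      rw [hminus, hplus]
      rw [hplus] at h2
      nlinarith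
    have hrhs : ‖(1 - A : V →L[ℝ] V) v‖ ^ 2 ≤ (c * ‖(1 + A : V →L[ℝ] V) v‖) ^ 2 := by
      rcases le_or_gt (1 - 4 * lam / K ^ 2) 0 with h | h
      · have hle0 : ‖(1 - A : V →L[ℝ] V) v‖ ^ 2 ≤ 0 :=
          le_trans hsq (mul_nonpos_of_nonpos_of_nonneg h (by positivity))
        exact le_trans hle0 (sq_nonneg _)
      · calc ‖(1 - A : V →L[ℝ] V) v‖ ^ 2
            ≤ (1 - 4 * lam / K ^ 2) * ‖(1 + A : V →L[ℝ] V) v‖ ^ 2 := hsq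
          _ = (c * ‖(1 + A : V →L[ℝ] V) v‖) ^ 2 := by
              rw [mul_pow, hc, Real.sq_sqrt h.le]
    have := Real.sqrt_le_sqrt hrhs
    rwa [Real.sqrt_sq (norm_nonneg _),
      Real.sqrt_sq (mul_nonneg hcnn (norm_nonneg _))] at this
  have hM : ‖cayley A‖ < 1 := lt_of_le_of_lt hCbound hclt
  refine ⟨hU, hM, fun v => ?_⟩
  set M : ℝ := ‖cayley A‖ with hMdef
  have hMnn : 0 ≤ M := norm_nonneg _
  have hd : 0 < 1 - M ^ 2 := by nlinarith
  have hle : ‖(1 - A : V →L[ℝ] V) v‖ ≤ M * ‖(1 + A : V →L[ℝ] V) v‖ := by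
    rw [← hkey v]
    exact ContinuousLinearMap.le_opNorm _ _
  have hsq : ‖(1 - A : V →L[ℝ] V) v‖ ^ 2 ≤ M ^ 2 * ‖(1 + A : V →L[ℝ] V) v‖ ^ 2 := by
    nlinarith [norm_nonneg ((1 - A : V →L[ℝ] V) v), norm_nonneg ((1 + A : V →L[ℝ] V) v)]
  rw [hminus, hplus] at hsq
  have h5 : (‖v‖ ^ 2 + ‖A v‖ ^ 2) * (1 - M ^ 2) ≤ 2 * (1 + M ^ 2) * ⟪A v, v⟫ := by
    nlinarith [hsq]
  have h6 : (2 : ℝ) * ((1 + M ^ 2) / (1 - M ^ 2)) * ⟪A v, v⟫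
      = 2 * (1 + M ^ 2) * ⟪A v, v⟫ / (1 - M ^ 2) := by ring
  rw [h6, le_div_iff₀ hd]
  exact h5
end

section
/- Let V be a finite-dimensional real inner product space and let T : V → V be an invertible linear map that is normal (T ∘ T* = T* ∘ T) and such that I + T is invertible. Then I + T⁻¹ is invertible and 𝒞(T⁻¹) = −𝒞(T). -/
private lemma ring_inverse_eq_of {M : Type*} [MonoidWithZero M] (a b : M) (h1 : a * b = 1)
    (h2 : b * a = 1) : Ring.inverse a = b :=
  Ring.inverse_unit ⟨a, b, h1, h2⟩

/-- If `T` is invertible, normal, and `I + T` is invertible, then `I + T⁻¹` is invertible and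
`𝒞(T⁻¹) = −𝒞(T)`. -/
theorem cayley_inverse_eq_neg_cayley {V : Type*} [NormedAddCommGroup V]
    [InnerProductSpace ℝ V] [FiniteDimensional ℝ V] (T : V →L[ℝ] V) (hT : IsUnit T)
    (hnormal : T * ContinuousLinearMap.adjoint T = ContinuousLinearMap.adjoint T * T)
    (h1T : IsUnit (1 + T)) :
    IsUnit (1 + Ring.inverse T) ∧ cayley (Ring.inverse T) = -cayley T := by
  set S := Ring.inverse T with hS
  set J := Ring.inverse (1 + T) with hJ
  have hST : S * T = 1 := Ring.inverse_mul_cancel T hT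
  have hTS : T * S = 1 := Ring.mul_inverse_cancel T hT
  have hJ1 : (1 + T) * J = 1 := Ring.mul_inverse_cancel _ h1T
  have h1J : J * (1 + T) = 1 := Ring.inverse_mul_cancel _ h1T
  have hcomm : J * T = T * J := by
    calc J * T = J * (T * ((1 + T) * J)) := by rw [hJ1, mul_one]
    _ = J * (1 + T) * (T * J) := by noncomm_ring
    _ = T * J := by rw [h1J, one_mul]
  have h1 : 1 + S = S * (1 + T) := by rw [mul_add, hST, mul_one, add_comm]
  have h2 : 1 - S = S * (T - 1) := by rw [mul_sub, hST, mul_one]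
  have hinv : IsUnit (1 + S) := by
    rw [h1]; exact (isUnit_ringInverse.mpr hT).mul h1T
  refine ⟨hinv, ?_⟩
  have hinv2 : Ring.inverse (1 + S) = J * T := by
    apply ring_inverse_eq_of
    · calc (1 + S) * (J * T) = S * (1 + T) * J * T := by rw [h1]; noncomm_ring
      _ = S * T := by rw [mul_assoc S, hJ1, mul_one]
      _ = 1 := hST
    · calc J * T * (1 + S) = J * T * (S * (1 + T)) := by rw [h1]
      _ = J * (T * S) * (1 + T) := by noncomm_ring
      _ = 1 := by rw [hTS, mul_one, h1J]
  show (1 - S) * Ring.inverse (1 + S) = -((1 - T) * J)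
  rw [hinv2, h2]
  calc S * (T - 1) * (J * T) = S * (T - 1) * (T * J) := by rw [hcomm]
    _ = S * T * ((T - 1) * J) := by noncomm_ring
    _ = (T - 1) * J := by rw [hST, one_mul]
    _ = -((1 - T) * J) := by noncomm_ring
end

section
/- Let f : ℝⁿ → ℝⁿ be continuous and monotone, i.e. ⟨f(ξ) − f(ζ), ξ − ζ⟩ ≥ 0 for all ξ, ζ ∈ ℝⁿ. Then the map T(ξ) := ξ + f(ξ) is a homeomorphism of ℝⁿ onto ℝⁿ. -/
open scoped RealInnerProductSpace
open Metric MeasureTheory Filter Function Set ContinuousLinearMap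
open scoped Convolution Topology NNReal

lemma expand_aux {n : ℕ} {g : EuclideanSpace ℝ (Fin n) → EuclideanSpace ℝ (Fin n)}
    (hmono : ∀ ξ ζ : EuclideanSpace ℝ (Fin n), 0 ≤ ⟪g ξ - g ζ, ξ - ζ⟫)
    (x y : EuclideanSpace ℝ (Fin n)) :
    ‖x - y‖ ≤ ‖(x + g x) - (y + g y)‖ := by
  have key : (x + g x) - (y + g y) = (x - y) + (g x - g y) := by abel
  have h1 : ‖x - y‖ ^ 2 ≤ ⟪(x + g x) - (y + g y), x - y⟫ := by
    rw [key, inner_add_left, real_inner_self_eq_norm_sq]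
    nlinarith [hmono x y, real_inner_comm (g x - g y) (x - y)]
  have h2 : ⟪(x + g x) - (y + g y), x - y⟫ ≤ ‖(x + g x) - (y + g y)‖ * ‖x - y‖ :=
    real_inner_le_norm _ _
  nlinarith [norm_nonneg (x - y), norm_nonneg ((x + g x) - (y + g y))]

set_option maxHeartbeats 1000000 in
lemma surj_of_locLip {n : ℕ} {g : EuclideanSpace ℝ (Fin n) → EuclideanSpace ℝ (Fin n)}
    (hg : Continuous g)
    (hmono : ∀ ξ ζ : EuclideanSpace ℝ (Fin n), 0 ≤ ⟪g ξ - g ζ, ξ - ζ⟫)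
    (hlip : ∀ x : EuclideanSpace ℝ (Fin n), ∃ K : ℝ≥0, ∃ s ∈ 𝓝 x, LipschitzOnWith K g s) :
    Surjective (fun x => x + g x) := by
  obtain ⟨T, hTdef⟩ : ∃ T : EuclideanSpace ℝ (Fin n) → EuclideanSpace ℝ (Fin n),
      T = fun x => x + g x := ⟨_, rfl⟩
  rw [← hTdef]
  have hTx : ∀ x, T x = x + g x := fun x => by rw [hTdef]
  have hT : Continuous T := by rw [hTdef]; exact continuous_id.add hg
  have hexp : ∀ x y, ‖x - y‖ ≤ ‖T x - T y‖ := by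
    intro x y; rw [hTx, hTx]; exact expand_aux hmono x y
  have hexpd : ∀ x y, dist x y ≤ dist (T x) (T y) := by
    intro x y; rw [dist_eq_norm, dist_eq_norm]; exact hexp x y
  have hmonoT : ∀ u v, ‖u - v‖ ^ 2 ≤ ⟪T u - T v, u - v⟫ := by
    intro u v
    have key : T u - T v = (u - v) + (g u - g v) := by rw [hTx, hTx]; abel
    rw [key, inner_add_left, real_inner_self_eq_norm_sq]
    nlinarith [hmono u v, real_inner_comm (g u - g v) (u - v)]
  -- range is closed
  have hclosed : IsClosed (range T) := by
    apply IsSeqClosed.isClosed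
    intro u z hu huz
    choose v hv using hu
    have hcu : CauchySeq u := huz.cauchySeq
    have hcv : CauchySeq v := by
      rw [Metric.cauchySeq_iff] at hcu ⊢
      intro ε hε
      obtain ⟨N, hN⟩ := hcu ε hε
      exact ⟨N, fun m hm k hk =>
        lt_of_le_of_lt (by simpa [hv] using hexpd (v m) (v k)) (hN m hm k hk)⟩
    obtain ⟨x, hx⟩ := cauchySeq_tendsto_of_complete hcv
    refine ⟨x, tendsto_nhds_unique ?_ huz⟩
    have h1 := (hT.tendsto x).comp hx
    have h2 : T ∘ v = u := funext hv
    rwa [h2] at h1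
  -- range is open
  have hopen : IsOpen (range T) := by
    rw [Metric.isOpen_iff]
    rintro y₀ ⟨x₀, rfl⟩
    obtain ⟨K, s, hs, hKs⟩ := hlip x₀
    obtain ⟨r, hr, hball⟩ := Metric.nhds_basis_closedBall.mem_iff.mp hs
    obtain ⟨L, hL1, hTlip⟩ : ∃ L : ℝ, 1 ≤ L ∧ ∀ u ∈ closedBall x₀ r, ∀ v ∈ closedBall x₀ r,
        ‖T u - T v‖ ≤ L * ‖u - v‖ := by
      refine ⟨(K : ℝ) + 1, by linarith [K.coe_nonneg], fun u hu v hv => ?_⟩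
      have h1 : ‖g u - g v‖ ≤ (K : ℝ) * ‖u - v‖ := by
        have := hKs.dist_le_mul u (hball hu) v (hball hv)
        simpa [dist_eq_norm] using this
      have h2 : T u - T v = (u - v) + (g u - g v) := by rw [hTx, hTx]; abel
      calc ‖T u - T v‖ ≤ ‖u - v‖ + ‖g u - g v‖ := by rw [h2]; exact norm_add_le _ _
        _ ≤ ‖u - v‖ + (K : ℝ) * ‖u - v‖ := by linarith
        _ = ((K : ℝ) + 1) * ‖u - v‖ := by ring
    have hL0 : 0 < L := by linarith
    obtain ⟨t, c, ht0, ht1, hc0, hc1, hcsq⟩ :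
        ∃ t c : ℝ, 0 < t ∧ t ≤ 1 ∧ 0 ≤ c ∧ c < 1 ∧ 1 - 2 * t + t ^ 2 * L ^ 2 = c ^ 2 := by
      have hLsq : 0 < L ^ 2 := by positivity
      have h1 : (0:ℝ) < 1 / L ^ 2 := by positivity
      have h2 : 1 / L ^ 2 ≤ 1 := by rw [div_le_one hLsq]; nlinarith
      refine ⟨1 / L ^ 2, Real.sqrt (1 - 1 / L ^ 2), h1, h2, Real.sqrt_nonneg _, ?_, ?_⟩
      · have := Real.sq_sqrt (by linarith : (0:ℝ) ≤ 1 - 1 / L ^ 2)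
        nlinarith [Real.sqrt_nonneg (1 - 1 / L ^ 2)]
      · have := Real.sq_sqrt (by linarith : (0:ℝ) ≤ 1 - 1 / L ^ 2)
        rw [this]
        field_simp
        ring
    obtain ⟨δ, hδ0, hδt⟩ : ∃ δ : ℝ, 0 < δ ∧ t * δ ≤ (1 - c) * r := by
      refine ⟨(1 - c) * r / t, div_pos (mul_pos (by linarith) hr) ht0, le_of_eq ?_⟩
      field_simp
    refine ⟨δ, hδ0, fun y hy => ?_⟩
    -- contraction estimate
    have hkey : ∀ u ∈ closedBall x₀ r, ∀ v ∈ closedBall x₀ r,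
        ‖(u - t • (T u - y)) - (v - t • (T v - y))‖ ≤ c * ‖u - v‖ := by
      intro u hu v hv
      have heq : (u - t • (T u - y)) - (v - t • (T v - y)) = (u - v) - t • (T u - T v) := by
        rw [smul_sub, smul_sub, smul_sub]; abel
      have hsq : ‖(u - v) - t • (T u - T v)‖ ^ 2
          = ‖u - v‖ ^ 2 - 2 * (t * ⟪u - v, T u - T v⟫) + t ^ 2 * ‖T u - T v‖ ^ 2 := by
        rw [norm_sub_sq_real, real_inner_smul_right, norm_smul, Real.norm_eq_abs,
          abs_of_pos ht0, mul_pow]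
      have hTl := hTlip u hu v hv
      have hTm : ‖u - v‖ ^ 2 ≤ ⟪u - v, T u - T v⟫ := by
        rw [real_inner_comm]; exact hmonoT u v
      have hTl2 : ‖T u - T v‖ ^ 2 ≤ L ^ 2 * ‖u - v‖ ^ 2 := by
        nlinarith [norm_nonneg (T u - T v), norm_nonneg (u - v)]
      have ha : 2 * t * ‖u - v‖ ^ 2 ≤ 2 * t * ⟪u - v, T u - T v⟫ :=
        mul_le_mul_of_nonneg_left hTm (by linarith)
      have hb : t ^ 2 * ‖T u - T v‖ ^ 2 ≤ t ^ 2 * (L ^ 2 * ‖u - v‖ ^ 2) :=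
        mul_le_mul_of_nonneg_left hTl2 (sq_nonneg t)
      have h3 : ‖(u - v) - t • (T u - T v)‖ ^ 2 ≤ (c * ‖u - v‖) ^ 2 := by
        rw [hsq, mul_pow, ← hcsq]
        nlinarith
      rw [heq]
      exact le_of_pow_le_pow_left₀ two_ne_zero (mul_nonneg hc0 (norm_nonneg (u - v))) h3
    have hself : ∀ u ∈ closedBall x₀ r, (u - t • (T u - y)) ∈ closedBall x₀ r := by
      intro u hu
      have h0 : x₀ ∈ closedBall x₀ r := mem_closedBall_self hr.le
      have h1 := hkey u hu x₀ h0
      have h2 : ‖(u - t • (T u - y)) - x₀‖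
          ≤ ‖(u - t • (T u - y)) - (x₀ - t • (T x₀ - y))‖ + ‖t • (T x₀ - y)‖ := by
        have h2a : (u - t • (T u - y)) - x₀
            = ((u - t • (T u - y)) - (x₀ - t • (T x₀ - y))) + (-(t • (T x₀ - y))) := by abel
        rw [h2a]
        exact (norm_add_le _ _).trans_eq (by rw [norm_neg])
      have h3 : ‖t • (T x₀ - y)‖ ≤ t * δ := by
        rw [norm_smul, Real.norm_eq_abs, abs_of_pos ht0]
        have h3a : ‖T x₀ - y‖ ≤ δ := by
          rw [← dist_eq_norm, dist_comm]
          exact (mem_ball.mp hy).le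
        nlinarith
      have h4 : ‖u - x₀‖ ≤ r := by rwa [← dist_eq_norm, ← mem_closedBall]
      rw [mem_closedBall, dist_eq_norm]
      have h5 : c * ‖u - x₀‖ ≤ c * r := mul_le_mul_of_nonneg_left h4 hc0
      calc ‖(u - t • (T u - y)) - x₀‖ ≤ c * ‖u - x₀‖ + t * δ := by linarith
        _ ≤ c * r + (1 - c) * r := by linarith
        _ = r := by ring
    -- Banach fixed point on the closed ball
    haveI : Nonempty (closedBall x₀ r) := ⟨⟨x₀, mem_closedBall_self hr.le⟩⟩
    haveI : CompleteSpace (closedBall x₀ r) := Metric.isClosed_closedBall.completeSpace_coe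
    obtain ⟨Φ, hΦdef⟩ : ∃ Φ : closedBall x₀ r → closedBall x₀ r,
        ∀ u, (Φ u : EuclideanSpace ℝ (Fin n)) = u.1 - t • (T u.1 - y) :=
      ⟨fun u => ⟨u.1 - t • (T u.1 - y), hself u.1 u.2⟩, fun u => rfl⟩
    have hcon : ContractingWith ⟨c, hc0⟩ Φ := by
      constructor
      · exact_mod_cast hc1
      · apply LipschitzWith.of_dist_le_mul
        intro a b
        rw [Subtype.dist_eq, Subtype.dist_eq, dist_eq_norm, dist_eq_norm, hΦdef, hΦdef]
        exact hkey a.1 a.2 b.1 b.2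
    set x := ContractingWith.fixedPoint Φ hcon with hxdef
    have hfix : Φ x = x := hcon.fixedPoint_isFixedPt
    have hx : x.1 - t • (T x.1 - y) = x.1 := by rw [← hΦdef, hfix]
    have hz : t • (T x.1 - y) = 0 := by
      have h := sub_eq_iff_eq_add.mp hx
      have := congrArg (fun w => w - x.1) h
      simpa using this.symm
    have hTfix : T x.1 = y := by
      rcases smul_eq_zero.mp hz with h | h
      · exact absurd h ht0.ne'
      · exact sub_eq_zero.mp h
    exact ⟨x.1, hTfix⟩
  -- clopen implies univ
  intro y
  have huniv : range T = univ := IsClopen.eq_univ ⟨hclosed, hopen⟩ ⟨T 0, 0, rfl⟩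
  have : y ∈ range T := huniv ▸ mem_univ y
  exact this

section Moll
variable {n : ℕ} {f : EuclideanSpace ℝ (Fin n) → EuclideanSpace ℝ (Fin n)}

lemma moll_integrable (hf : Continuous f) (φ : ContDiffBump (0 : EuclideanSpace ℝ (Fin n)))
    (x : EuclideanSpace ℝ (Fin n)) :
    Integrable (fun t => φ.normed volume t • f (x - t)) volume := by
  apply Continuous.integrable_of_hasCompactSupport
  · exact φ.continuous_normed.smul (hf.comp (continuous_const.sub continuous_id))
  · exact φ.hasCompactSupport_normed.smul_right

lemma moll_eq (hf : Continuous f) (φ : ContDiffBump (0 : EuclideanSpace ℝ (Fin n)))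
    (x : EuclideanSpace ℝ (Fin n)) :
    (φ.normed volume ⋆[lsmul ℝ ℝ, volume] f) x = ∫ t, φ.normed volume t • f (x - t) := by
  simp [convolution_def, ContinuousLinearMap.lsmul_apply]

lemma moll_mono (hf : Continuous f)
    (hmono : ∀ ξ ζ : EuclideanSpace ℝ (Fin n), 0 ≤ ⟪f ξ - f ζ, ξ - ζ⟫)
    (φ : ContDiffBump (0 : EuclideanSpace ℝ (Fin n))) (x z : EuclideanSpace ℝ (Fin n)) :
    0 ≤ ⟪(φ.normed volume ⋆[lsmul ℝ ℝ, volume] f) x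
        - (φ.normed volume ⋆[lsmul ℝ ℝ, volume] f) z, x - z⟫ := by
  rw [moll_eq hf, moll_eq hf, ← integral_sub (moll_integrable hf φ x) (moll_integrable hf φ z)]
  have hsub : (fun t => φ.normed volume t • f (x - t) - φ.normed volume t • f (z - t))
      = fun t => φ.normed volume t • (f (x - t) - f (z - t)) := by
    funext t; rw [smul_sub]
  rw [hsub, real_inner_comm, ← integral_inner ((moll_integrable hf φ x).sub
    (moll_integrable hf φ z) |>.congr ?meas)]
  case meas =>
    filter_upwards with t
    simp [smul_sub]
  apply integral_nonneg
  intro t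
  simp only [Pi.zero_apply]
  rw [real_inner_smul_right]
  have h1 : x - z = (x - t) - (z - t) := by abel
  have h2 : 0 ≤ ⟪x - z, f (x - t) - f (z - t)⟫ := by
    rw [real_inner_comm, h1]
    exact hmono _ _
  exact mul_nonneg (φ.nonneg_normed t) h2

end Moll

set_option maxHeartbeats 1000000 in
/-- If `f : ℝⁿ → ℝⁿ` is continuous and monotone, i.e. `⟨f ξ − f ζ, ξ − ζ⟩ ≥ 0` for all `ξ, ζ`,
then `T ξ := ξ + f ξ` is a homeomorphism of `ℝⁿ` onto `ℝⁿ`. -/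
theorem isHomeomorph_add_of_monotone {n : ℕ}
    (f : EuclideanSpace ℝ (Fin n) → EuclideanSpace ℝ (Fin n)) (hf : Continuous f)
    (hmono : ∀ ξ ζ : EuclideanSpace ℝ (Fin n), 0 ≤ ⟪f ξ - f ζ, ξ - ζ⟫) :
    IsHomeomorph (fun ξ : EuclideanSpace ℝ (Fin n) => ξ + f ξ) := by
  have hloc : LocallyIntegrable f volume := hf.locallyIntegrable
  -- surjectivity via mollification
  have hsurj : Surjective (fun ξ : EuclideanSpace ℝ (Fin n) => ξ + f ξ) := by
    intro y
    -- the bump family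
    have hφex : ∀ k : ℕ, ∃ φ : ContDiffBump (0 : EuclideanSpace ℝ (Fin n)),
        φ.rOut = ((k : ℝ) + 1)⁻¹ := by
      intro k
      have h1 : (0:ℝ) < ((k : ℝ) + 1)⁻¹ := by positivity
      exact ⟨⟨((k : ℝ) + 1)⁻¹ / 2, ((k : ℝ) + 1)⁻¹, by positivity, by linarith⟩, rfl⟩
    choose φ hφ using hφex
    have hrOut : Tendsto (fun k => (φ k).rOut) atTop (𝓝 0) := by
      simp only [hφ]
      have := tendsto_one_div_add_atTop_nhds_zero_nat (𝕜 := ℝ)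
      simpa [one_div] using this
    set gk : ℕ → EuclideanSpace ℝ (Fin n) → EuclideanSpace ℝ (Fin n) :=
      fun k => (φ k).normed volume ⋆[lsmul ℝ ℝ, volume] f with hgk
    have hsmooth : ∀ k, ContDiff ℝ 1 (gk k) := fun k =>
      (φ k).hasCompactSupport_normed.contDiff_convolution_left (lsmul ℝ ℝ)
        (φ k).contDiff_normed hloc
    have hcont : ∀ k, Continuous (gk k) := fun k => (hsmooth k).continuous
    have hgmono : ∀ k, ∀ ξ ζ : EuclideanSpace ℝ (Fin n), 0 ≤ ⟪gk k ξ - gk k ζ, ξ - ζ⟫ :=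
      fun k => moll_mono hf hmono (φ k)
    have hglip : ∀ k, ∀ x : EuclideanSpace ℝ (Fin n),
        ∃ K : ℝ≥0, ∃ s ∈ 𝓝 x, LipschitzOnWith K (gk k) s := fun k x =>
      (hsmooth k).contDiffAt.exists_lipschitzOnWith
    have hsolve : ∀ k, ∃ x, x + gk k x = y := fun k =>
      surj_of_locLip (hcont k) (hgmono k) (hglip k) y
    choose x hx using hsolve
    -- gk k 0 converges to f 0, hence is bounded
    have hconv0 : Tendsto (fun k => gk k 0) atTop (𝓝 (f 0)) :=
      ContDiffBump.convolution_tendsto_right_of_continuous hrOut hf 0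
    have hbdd : ∃ C : ℝ, ∀ k, ‖gk k 0‖ ≤ C := by
      obtain ⟨C, hC⟩ := (hconv0.norm.bddAbove_range)
      exact ⟨C, fun k => hC ⟨k, rfl⟩⟩
    obtain ⟨C, hC⟩ := hbdd
    -- the solutions are bounded
    have hxball : ∀ k, x k ∈ closedBall (0 : EuclideanSpace ℝ (Fin n)) (‖y‖ + C) := by
      intro k
      rw [mem_closedBall, dist_eq_norm, sub_zero]
      have h1 := expand_aux (hgmono k) (x k) 0
      rw [hx k] at h1
      have h2 : ‖y - (0 + gk k 0)‖ ≤ ‖y‖ + ‖gk k 0‖ := by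
        rw [zero_add]
        exact norm_sub_le _ _
      have h3 := hC k
      calc ‖x k‖ = ‖x k - 0‖ := by rw [sub_zero]
        _ ≤ ‖y - (0 + gk k 0)‖ := h1
        _ ≤ ‖y‖ + C := by linarith
    -- extract a convergent subsequence
    obtain ⟨a, -, σ, hσmono, hσtend⟩ :=
      (isCompact_closedBall (0 : EuclideanSpace ℝ (Fin n)) (‖y‖ + C)).tendsto_subseq hxball
    -- the mollified values along the subsequence converge to f a
    have hconv2 : Tendsto (fun j => gk (σ j) (x (σ j))) atTop (𝓝 (f a)) := by
      apply ContDiffBump.convolution_tendsto_right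
        (φ := fun j => φ (σ j)) (g := fun _ => f) (k := fun j => x (σ j))
      · exact hrOut.comp hσmono.tendsto_atTop
      · exact Eventually.of_forall fun _ => hf.aestronglyMeasurable
      · exact (hf.tendsto a).comp tendsto_snd
      · exact hσtend
    have hfinal : Tendsto (fun j => x (σ j) + gk (σ j) (x (σ j))) atTop (𝓝 (a + f a)) :=
      hσtend.add hconv2
    have hconst : (fun j => x (σ j) + gk (σ j) (x (σ j))) = fun _ => y := by
      funext j; exact hx (σ j)
    rw [hconst] at hfinal
    exact ⟨a, (tendsto_nhds_unique tendsto_const_nhds hfinal).symm⟩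
  -- injectivity
  have hinj : Injective (fun ξ : EuclideanSpace ℝ (Fin n) => ξ + f ξ) := by
    intro a b hab
    have h1 := expand_aux hmono a b
    simp only at hab
    rw [hab, sub_self, norm_zero] at h1
    rwa [← sub_eq_zero, ← norm_le_zero_iff]
  -- assemble the homeomorphism
  let e := Equiv.ofBijective _ ⟨hinj, hsurj⟩
  have hTcont : Continuous (fun ξ : EuclideanSpace ℝ (Fin n) => ξ + f ξ) :=
    continuous_id.add hf
  have hinv : Continuous e.symm := by
    apply LipschitzWith.continuous (K := 1)
    apply LipschitzWith.of_dist_le_mul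
    intro a b
    rw [NNReal.coe_one, one_mul, dist_eq_norm, dist_eq_norm]
    have h1 := expand_aux hmono (e.symm a) (e.symm b)
    have ha : e.symm a + f (e.symm a) = a := e.apply_symm_apply a
    have hb : e.symm b + f (e.symm b) = b := e.apply_symm_apply b
    rwa [ha, hb] at h1
  exact Homeomorph.isHomeomorph ⟨e, hTcont, hinv⟩
end

section
/- Let K ≥ 2 and let A : ℝⁿ → ℝⁿ be a continuous map with A(0) = 0 satisfying the uniform ellipticity bound ‖ξ − ζ‖² + ‖A(ξ) − A(ζ)‖² ≤ K·⟨A(ξ) − A(ζ), ξ − ζ⟩ for all ξ, ζ ∈ ℝⁿ. Then the map ξ ↦ ξ + A(ξ) is a homeomorphism of ℝⁿ, and the nonlinear Cayley transform ℳ := (id − A) ∘ (id + A)⁻¹ satisfies ℳ(0) = 0 and is Lipschitz continuous with Lipschitz constant √((K − 2)/(K + 2)): ‖ℳ(ζ₁) − ℳ(ζ₂)‖ ≤ √((K−2)/(K+2))·‖ζ₁ − ζ₂‖ for all ζ₁, ζ₂ ∈ ℝⁿ. -/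
open scoped RealInnerProductSpace

/-- Let `K ≥ 2` and let `A : ℝⁿ → ℝⁿ` be continuous with `A 0 = 0` satisfying the uniform
ellipticity bound `‖ξ − ζ‖² + ‖A ξ − A ζ‖² ≤ K·⟨A ξ − A ζ, ξ − ζ⟩`. Then `ξ ↦ ξ + A ξ` is a
homeomorphism `h` of `ℝⁿ`, and the nonlinear Cayley transform
`ℳ = (id − A) ∘ (id + A)⁻¹`, i.e. `ℳ ζ = h.symm ζ − A (h.symm ζ)`, satisfies `ℳ 0 = 0` and
is Lipschitz with constant `√((K − 2)/(K + 2))`. -/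
theorem nonlinear_cayley_lipschitz {n : ℕ} (K : ℝ) (hK : 2 ≤ K)
    (A : EuclideanSpace ℝ (Fin n) → EuclideanSpace ℝ (Fin n)) (hA : Continuous A)
    (hA0 : A 0 = 0)
    (hell : ∀ ξ ζ : EuclideanSpace ℝ (Fin n),
      ‖ξ - ζ‖ ^ 2 + ‖A ξ - A ζ‖ ^ 2 ≤ K * ⟪A ξ - A ζ, ξ - ζ⟫) :
    ∃ h : EuclideanSpace ℝ (Fin n) ≃ₜ EuclideanSpace ℝ (Fin n),
      (∀ ξ : EuclideanSpace ℝ (Fin n), h ξ = ξ + A ξ) ∧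
      (h.symm 0 - A (h.symm 0) = 0) ∧
      (∀ ζ₁ ζ₂ : EuclideanSpace ℝ (Fin n),
        ‖(h.symm ζ₁ - A (h.symm ζ₁)) - (h.symm ζ₂ - A (h.symm ζ₂))‖ ≤
          Real.sqrt ((K - 2) / (K + 2)) * ‖ζ₁ - ζ₂‖) := by
  classical
  have hK0 : (0:ℝ) < K := lt_of_lt_of_le two_pos hK
  let E := EuclideanSpace ℝ (Fin n)
  set F : E → E := fun ξ => ξ + A ξ with hFdef
  -- positivity of the inner product
  have hp : ∀ ξ ζ : E, 0 ≤ ⟪A ξ - A ζ, ξ - ζ⟫ := by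
    intro ξ ζ
    nlinarith [hell ξ ζ, sq_nonneg ‖ξ - ζ‖, sq_nonneg ‖A ξ - A ζ‖]
  -- A is K-Lipschitz
  have hALip : ∀ ξ ζ : E, ‖A ξ - A ζ‖ ≤ K * ‖ξ - ζ‖ := by
    intro ξ ζ
    rcases eq_or_lt_of_le (norm_nonneg (A ξ - A ζ)) with h | h
    · rw [← h]; positivity
    · have hcs := real_inner_le_norm (A ξ - A ζ) (ξ - ζ)
      nlinarith [hell ξ ζ, sq_nonneg ‖ξ - ζ‖, norm_nonneg (ξ - ζ)]
  -- F expands distances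
  have hFsub : ∀ ξ ζ : E, F ξ - F ζ = (ξ - ζ) + (A ξ - A ζ) := by
    intro ξ ζ; simp only [F]; abel
  have hFexp : ∀ ξ ζ : E, ‖ξ - ζ‖ ≤ ‖F ξ - F ζ‖ := by
    intro ξ ζ
    have h2 : ‖ξ - ζ‖ ^ 2 ≤ ‖F ξ - F ζ‖ ^ 2 := by
      rw [hFsub, norm_add_sq_real]
      have := hp ξ ζ
      rw [real_inner_comm] at this
      nlinarith [sq_nonneg ‖A ξ - A ζ‖]
    have := Real.sqrt_le_sqrt h2
    rwa [Real.sqrt_sq (norm_nonneg _), Real.sqrt_sq (norm_nonneg _)] at this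
  have hinj : Function.Injective F := by
    intro ξ ζ h
    have := hFexp ξ ζ
    rw [h, sub_self, norm_zero] at this
    have : ξ - ζ = 0 := norm_le_zero_iff.mp this
    exact sub_eq_zero.mp this
  -- surjectivity via contraction
  set t : ℝ := ((1 + K) ^ 2)⁻¹ with htdef
  have ht0 : 0 < t := by positivity
  have ht1 : t ≤ 1 := by
    rw [htdef]
    rw [inv_le_one_iff₀]
    right; nlinarith
  have hsurj : Function.Surjective F := by
    intro ζ
    set T : E → E := fun ξ => ξ - t • (F ξ - ζ) with hTdef
    have hTlip : ∀ ξ₁ ξ₂ : E, ‖T ξ₁ - T ξ₂‖ ≤ Real.sqrt (1 - t) * ‖ξ₁ - ξ₂‖ := by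
      intro ξ₁ ξ₂
      have hT : T ξ₁ - T ξ₂ = (ξ₁ - ξ₂) - t • (F ξ₁ - F ξ₂) := by
        simp only [T]; module
      have hsq : ‖T ξ₁ - T ξ₂‖ ^ 2 ≤ (1 - t) * ‖ξ₁ - ξ₂‖ ^ 2 := by
        rw [hT, norm_sub_sq_real, real_inner_smul_right, norm_smul, Real.norm_eq_abs,
          abs_of_pos ht0, mul_pow]
        have hip : ‖ξ₁ - ξ₂‖ ^ 2 ≤ ⟪ξ₁ - ξ₂, F ξ₁ - F ξ₂⟫ := by
          rw [hFsub, inner_add_right, real_inner_self_eq_norm_sq]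
          have := hp ξ₁ ξ₂
          rw [real_inner_comm] at this
          linarith
        have hnorm : ‖F ξ₁ - F ξ₂‖ ≤ (1 + K) * ‖ξ₁ - ξ₂‖ := by
          rw [hFsub]
          calc ‖(ξ₁ - ξ₂) + (A ξ₁ - A ξ₂)‖ ≤ ‖ξ₁ - ξ₂‖ + ‖A ξ₁ - A ξ₂‖ := norm_add_le _ _
            _ ≤ (1 + K) * ‖ξ₁ - ξ₂‖ := by have := hALip ξ₁ ξ₂; linarith
        have hsqn : ‖F ξ₁ - F ξ₂‖ ^ 2 ≤ (1 + K) ^ 2 * ‖ξ₁ - ξ₂‖ ^ 2 := by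
          rw [← mul_pow]; exact pow_le_pow_left₀ (norm_nonneg _) hnorm 2
        have ht2 : t ^ 2 * (1 + K) ^ 2 = t := by
          rw [htdef]; field_simp
        nlinarith [sq_nonneg t, ht0]
      have h1t : (0:ℝ) ≤ 1 - t := by linarith
      have := Real.sqrt_le_sqrt hsq
      rwa [Real.sqrt_sq (norm_nonneg _), Real.sqrt_mul h1t, Real.sqrt_sq (norm_nonneg _)]
        at this
    set c : ℝ := Real.sqrt (1 - t) with hcdef
    have hc0 : 0 ≤ c := Real.sqrt_nonneg _
    have hc1 : c < 1 := by
      have : c < Real.sqrt 1 := Real.sqrt_lt_sqrt (by linarith) (by linarith)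
      simpa using this
    have hcontr : ContractingWith (Real.toNNReal c) T := by
      constructor
      · exact_mod_cast (Real.toNNReal_lt_one).mpr hc1
      · apply LipschitzWith.of_dist_le_mul
        intro x y
        rw [dist_eq_norm, dist_eq_norm, Real.coe_toNNReal c hc0]
        exact hTlip x y
      
    have : ∃ ξ : E, T ξ = ξ := ⟨hcontr.fixedPoint T, hcontr.fixedPoint_isFixedPt⟩
    obtain ⟨ξ, hξ⟩ := this
    refine ⟨ξ, ?_⟩
    have : t • (F ξ - ζ) = 0 := by
      have := hξ
      simp only [T] at this
      have h2 : ξ - t • (F ξ - ζ) - ξ = 0 := by rw [this]; abel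
      rw [sub_sub_cancel_left] at h2
      simpa using h2
    rcases smul_eq_zero.mp this with h | h
    · exact absurd h (ne_of_gt ht0)
    · exact (sub_eq_zero.mp h)
  -- build the homeomorphism
  have hFcont : Continuous F := continuous_id.add hA
  set e : E ≃ E := Equiv.ofBijective F ⟨hinj, hsurj⟩ with hedef
  have hinvlip : ∀ ζ₁ ζ₂ : E, ‖e.symm ζ₁ - e.symm ζ₂‖ ≤ ‖ζ₁ - ζ₂‖ := by
    intro ζ₁ ζ₂
    have := hFexp (e.symm ζ₁) (e.symm ζ₂)
    have h1 : F (e.symm ζ₁) = ζ₁ := e.apply_symm_apply ζ₁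
    have h2 : F (e.symm ζ₂) = ζ₂ := e.apply_symm_apply ζ₂
    rwa [h1, h2] at this
  have hinvcont : Continuous e.symm := by
    apply (LipschitzWith.of_dist_le_mul (K := 1) ?_).continuous
    intro x y
    rw [dist_eq_norm, dist_eq_norm, NNReal.coe_one, one_mul]
    exact hinvlip x y
  refine ⟨⟨e, hFcont, hinvcont⟩, fun ξ => rfl, ?_, ?_⟩
  · have hF0 : F 0 = 0 := by simp [F, hA0]
    have h0 : e.symm 0 = 0 := by
      rw [Equiv.symm_apply_eq]
      exact hF0.symm
    show e.symm 0 - A (e.symm 0) = 0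
    rw [h0, hA0, sub_zero]
  · intro ζ₁ ζ₂
    show ‖(e.symm ζ₁ - A (e.symm ζ₁)) - (e.symm ζ₂ - A (e.symm ζ₂))‖ ≤ _
    set ξ₁ := e.symm ζ₁
    set ξ₂ := e.symm ζ₂
    have h1 : ζ₁ = ξ₁ + A ξ₁ := (e.apply_symm_apply ζ₁).symm
    have h2 : ζ₂ = ξ₂ + A ξ₂ := (e.apply_symm_apply ζ₂).symm
    rw [h1, h2]
    set x : E := ξ₁ - ξ₂
    set a : E := A ξ₁ - A ξ₂
    have hx : (ξ₁ - A ξ₁) - (ξ₂ - A ξ₂) = x - a := by simp only [x, a]; abel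
    have hy : (ξ₁ + A ξ₁) - (ξ₂ + A ξ₂) = x + a := by simp only [x, a]; abel
    rw [hx, hy]
    have hK2 : (0:ℝ) < K + 2 := by linarith
    have hq : (0:ℝ) ≤ (K - 2) / (K + 2) := by
      apply div_nonneg <;> linarith
    have hsq : ‖x - a‖ ^ 2 ≤ (K - 2) / (K + 2) * ‖x + a‖ ^ 2 := by
      rw [div_mul_eq_mul_div, le_div_iff₀ hK2, norm_sub_sq_real, norm_add_sq_real]
      have hel := hell ξ₁ ξ₂
      have hpp := hp ξ₁ ξ₂
      have hcomm : ⟪A ξ₁ - A ξ₂, ξ₁ - ξ₂⟫ = ⟪x, a⟫ := real_inner_comm _ _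
      rw [hcomm] at hel hpp
      nlinarith
    calc ‖x - a‖ = Real.sqrt (‖x - a‖ ^ 2) := (Real.sqrt_sq (norm_nonneg _)).symm
      _ ≤ Real.sqrt ((K - 2) / (K + 2) * ‖x + a‖ ^ 2) := Real.sqrt_le_sqrt hsq
      _ = Real.sqrt ((K - 2) / (K + 2)) * ‖x + a‖ := by
          rw [Real.sqrt_mul hq, Real.sqrt_sq (norm_nonneg _)]
end

section
/- Let V be a finite-dimensional real inner product space, let K ≥ 1 be a real number, and let A : V → V be a self-adjoint linear map. Then the two-sided ellipticity bounds K⁻¹‖v‖² ≤ ⟨A v, v⟩ ≤ K‖v‖² hold for all v ∈ V if and only if the one-sided inequality ‖v‖² + ‖A v‖² ≤ (K + K⁻¹)·⟨A v, v⟩ holds for all v ∈ V. -/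
open scoped RealInnerProductSpace

/-- For a self-adjoint linear map `A` on a finite-dimensional real inner product space and
`K ≥ 1`, the two-sided ellipticity bounds `K⁻¹‖v‖² ≤ ⟨A v, v⟩ ≤ K‖v‖²` hold for all `v`
if and only if the one-sided inequality `‖v‖² + ‖A v‖² ≤ (K + K⁻¹)·⟨A v, v⟩` holds for all
`v`. -/
theorem two_sided_iff_one_sided {V : Type*} [NormedAddCommGroup V] [InnerProductSpace ℝ V]
    [FiniteDimensional ℝ V] (A : V →L[ℝ] V)
    (hsa : ∀ u v : V, ⟪A u, v⟫ = ⟪u, A v⟫) (K : ℝ) (hK : 1 ≤ K) :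
    (∀ v : V, K⁻¹ * ‖v‖ ^ 2 ≤ ⟪A v, v⟫ ∧ ⟪A v, v⟫ ≤ K * ‖v‖ ^ 2) ↔
    (∀ v : V, ‖v‖ ^ 2 + ‖A v‖ ^ 2 ≤ (K + K⁻¹) * ⟪A v, v⟫) := by
  have hK0 : (0:ℝ) < K := lt_of_lt_of_le one_pos hK
  have hKinv : (0:ℝ) < K⁻¹ := inv_pos.mpr hK0
  have hKK : K * K⁻¹ = 1 := mul_inv_cancel₀ (ne_of_gt hK0)
  have hT : LinearMap.IsSymmetric (A : V →ₗ[ℝ] V) := fun u v => hsa u v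
  have hfin : Module.finrank ℝ V = Module.finrank ℝ V := rfl
  set b := hT.eigenvectorBasis hfin with hb
  set μ := hT.eigenvalues hfin with hμ
  have hAb : ∀ i, A (b i) = μ i • b i := fun i => hT.apply_eigenvectorBasis hfin i
  have hAbi : ∀ v i, ⟪A v, b i⟫ = μ i * ⟪b i, v⟫ := by
    intro v i
    rw [hsa v (b i), hAb i, real_inner_smul_right, real_inner_comm]
  have hnorm : ∀ v : V, ‖v‖ ^ 2 = ∑ i, ⟪b i, v⟫ ^ 2 := by
    intro v
    rw [← real_inner_self_eq_norm_sq, ← b.sum_inner_mul_inner v v]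
    exact Finset.sum_congr rfl fun i _ => by rw [real_inner_comm v (b i), sq]
  have hinner : ∀ v : V, ⟪A v, v⟫ = ∑ i, μ i * ⟪b i, v⟫ ^ 2 := by
    intro v
    rw [← b.sum_inner_mul_inner (A v) v]
    exact Finset.sum_congr rfl fun i _ => by rw [hAbi v i, sq]; ring
  have hAnorm : ∀ v : V, ‖A v‖ ^ 2 = ∑ i, μ i ^ 2 * ⟪b i, v⟫ ^ 2 := by
    intro v
    rw [← real_inner_self_eq_norm_sq, ← b.sum_inner_mul_inner (A v) (A v)]
    refine Finset.sum_congr rfl fun i _ => ?_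
    rw [real_inner_comm (A v) (b i), hAbi v i]
    ring
  have hbnorm : ∀ i, ‖b i‖ = 1 := fun i => b.orthonormal.1 i
  have hbAb : ∀ i, ⟪A (b i), b i⟫ = μ i := by
    intro i
    rw [hAb i, real_inner_smul_left, real_inner_self_eq_norm_sq, hbnorm i]
    ring
  constructor
  · intro h v
    have hμb : ∀ i, K⁻¹ ≤ μ i ∧ μ i ≤ K := by
      intro i
      have := h (b i)
      rw [hbAb i, hbnorm i] at this
      simpa using this
    rw [hnorm, hAnorm, hinner, Finset.mul_sum, ← Finset.sum_add_distrib]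
    refine Finset.sum_le_sum fun i _ => ?_
    obtain ⟨h1, h2⟩ := hμb i
    nlinarith [sq_nonneg (⟪b i, v⟫ : ℝ), mul_nonneg (mul_nonneg (sub_nonneg.mpr h1) (sub_nonneg.mpr h2)) (sq_nonneg (⟪b i, v⟫ : ℝ))]
  · intro h v
    have hμb : ∀ i, K⁻¹ ≤ μ i ∧ μ i ≤ K := by
      intro i
      have := h (b i)
      rw [hbnorm i, hbAb i, hAb i, norm_smul, hbnorm i] at this
      simp only [Real.norm_eq_abs, mul_one, one_pow] at this
      rw [sq_abs] at this
      have hKiK : K⁻¹ ≤ K := le_trans (by nlinarith) hK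
      constructor
      · by_contra hlt
        push_neg at hlt
        have h1 : 0 < K - μ i := by linarith
        have h2 : 0 < K⁻¹ - μ i := by linarith
        nlinarith [mul_pos h1 h2]
      · by_contra hlt
        push_neg at hlt
        have h1 : 0 < μ i - K := by linarith
        have h2 : 0 < μ i - K⁻¹ := by linarith
        nlinarith [mul_pos h1 h2]
    constructor
    · rw [hnorm, hinner, Finset.mul_sum]
      exact Finset.sum_le_sum fun i _ => by
        nlinarith [sq_nonneg (⟪b i, v⟫ : ℝ), (hμb i).1]
    · rw [hnorm, hinner, Finset.mul_sum]
      exact Finset.sum_le_sum fun i _ => by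
        nlinarith [sq_nonneg (⟪b i, v⟫ : ℝ), (hμb i).2]
end
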